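/- Assume (H_a) and (H_B). Let w^in ∈ Y_1^+ with M_1(w^in) ≤ ρ1, and for l ≥ 1 let w^l be a mass-conserving solution on [0,∞) of the truncated equation (with kernel a^l and initial condition w^{in,l}) belonging to L^∞_loc([0,∞); Y_m) for all m > 1. Then for every T ∈ (0,∞) and every i ≥ 1 there exists a constant Π_i(T), depending only on A, ρ1, i and T, such that for each l ≥ i, ∫_0^T |dw_i^l/dt (t)| dt ≤ Π_i(T). -/

import Mathlib

open MeasureTheory

/-- The moment of order `γ` of a sequence `y = (y_i)_{i ≥ 1}`. -/
noncomputable def mom (γ : ℝ) (y : ℕ → ℝ) : ℝ :=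
  ∑' n : ℕ, ((n + 1 : ℕ) : ℝ) ^ γ * y (n + 1)

/-- Membership in the space `Y_γ`. -/
def inY (γ : ℝ) (y : ℕ → ℝ) : Prop :=
  Summable fun n : ℕ => ((n + 1 : ℕ) : ℝ) ^ γ * |y (n + 1)|

/-- The gain term `(1/2) Σ_{j=i+1}^∞ Σ_{k=1}^{j-1} B_{j-k,k}^i a_{j-k,k} w_{j-k} w_k`. -/
noncomputable def gainT (a : ℕ → ℕ → ℝ) (B : ℕ → ℕ → ℕ → ℝ)
    (w : ℕ → ℝ → ℝ) (i : ℕ) (τ : ℝ) : ℝ :=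
  (1 / 2) * ∑' n : ℕ, ∑ k ∈ Finset.Ico 1 (i + 1 + n),
    B (i + 1 + n - k) k i * a (i + 1 + n - k) k * w (i + 1 + n - k) τ * w k τ

/-- The loss term `Σ_{j=1}^∞ a_{i,j} w_i w_j`. -/
noncomputable def lossT (a : ℕ → ℕ → ℝ) (w : ℕ → ℝ → ℝ) (i : ℕ) (τ : ℝ) : ℝ :=
  ∑' n : ℕ, a i (n + 1) * w i τ * w (n + 1) τ

/-- A solution on `[0,∞)` of the discrete collision-induced breakage equation with
kernel `a`, daughter distribution `B` and initial condition `win`. -/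
def IsSol (a : ℕ → ℕ → ℝ) (B : ℕ → ℕ → ℕ → ℝ) (win : ℕ → ℝ)
    (w : ℕ → ℝ → ℝ) : Prop :=
  (∀ i, 1 ≤ i → ∀ t : ℝ, 0 ≤ t → 0 ≤ w i t) ∧
  (∀ i, 1 ≤ i → ContinuousOn (w i) (Set.Ici (0 : ℝ))) ∧
  (∀ i, 1 ≤ i → w i 0 = win i) ∧
  (∀ i, 1 ≤ i → ∀ t : ℝ, 0 < t →
    IntegrableOn (lossT a w i) (Set.Ioc 0 t) ∧
    IntegrableOn (gainT a B w i) (Set.Ioc 0 t) ∧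
    w i t = win i + ∫ τ in Set.Ioc (0 : ℝ) t, (gainT a B w i τ - lossT a w i τ))

/-- Mass conservation: `M_1(w(t)) = M_1(w^in)` for all `t ≥ 0`. -/
def MassConserving (win : ℕ → ℝ) (w : ℕ → ℝ → ℝ) : Prop :=
  ∀ t : ℝ, 0 ≤ t → inY 1 (fun i => w i t) ∧ mom 1 (fun i => w i t) = mom 1 win

/-- Hypothesis (H_B) on the daughter distribution function. -/
def HB (B : ℕ → ℕ → ℕ → ℝ) : Prop :=
  ∀ j k : ℕ, 1 ≤ j → 1 ≤ k →
    (∀ i, 0 ≤ B j k i) ∧ (∀ i, B j k i = B k j i) ∧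
    (∀ i, j + k ≤ i → B j k i = 0) ∧
    (∑ i ∈ Finset.Ico 1 (j + k), (i : ℝ) * B j k i = (j : ℝ) + (k : ℝ))

/-- Hypothesis (H_m): moment damping at every order `m > 1`. -/
def Hmom (B : ℕ → ℕ → ℕ → ℝ) : Prop :=
  ∀ m : ℝ, 1 < m → ∃ ε κ : ℝ, 0 < ε ∧ ε < 1 ∧ 1 ≤ κ ∧
    ∀ j k : ℕ, 1 ≤ j → 1 ≤ k →
      ∑ i ∈ Finset.Ico 1 (j + k), (i : ℝ) ^ m * B j k i ≤
        (1 - ε) * ((j : ℝ) ^ m + (k : ℝ) ^ m) +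
          κ * ((j : ℝ) * (k : ℝ) ^ (m - 1) + (j : ℝ) ^ (m - 1) * (k : ℝ))

/-- Hypothesis (H_2): at least two fragments in each collision. -/
def H2 (B : ℕ → ℕ → ℕ → ℝ) : Prop :=
  ∀ j k : ℕ, 1 ≤ j → 1 ≤ k → 2 ≤ ∑ i ∈ Finset.Ico 1 (j + k), B j k i

/-- The collision kernel `a_{i,j} = A (i^α j^β + i^β j^α)`. -/
noncomputable def kerA (A α β : ℝ) (i j : ℕ) : ℝ :=
  A * ((i : ℝ) ^ α * (j : ℝ) ^ β + (i : ℝ) ^ β * (j : ℝ) ^ α)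

/-- The truncated collision kernel
`a^l_{i,j} = A (min{i,l}^{α₊} i^{α-α₊} j^β + i^β min{j,l}^{α₊} j^{α-α₊})`. -/
noncomputable def kerTrunc (A α β : ℝ) (l : ℕ) (i j : ℕ) : ℝ :=
  A * (((min i l : ℕ) : ℝ) ^ max α 0 * (i : ℝ) ^ (α - max α 0) * (j : ℝ) ^ β +
       (i : ℝ) ^ β * ((min j l : ℕ) : ℝ) ^ max α 0 * (j : ℝ) ^ (α - max α 0))

/-- The truncated initial condition `w^{in,l}`. -/
def winTrunc (l : ℕ) (win : ℕ → ℝ) (i : ℕ) : ℝ := if i ≤ l then win i else 0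

/-- `w ∈ L^∞_loc([0,∞); Y_m)` for every `m > 1`. -/
def LocBddMoments (w : ℕ → ℝ → ℝ) : Prop :=
  ∀ m : ℝ, 1 < m → ∀ T : ℝ, 0 < T → ∃ C : ℝ,
    ∀ t ∈ Set.Icc (0 : ℝ) T, inY m (fun i => w i t) ∧ mom m (fun i => w i t) ≤ C

/-- `sup_{t ∈ [0,T]} M_γ(w(t)) < ∞` for each `T > 0`. -/
def BddMoment (γ : ℝ) (w : ℕ → ℝ → ℝ) : Prop :=
  ∀ T : ℝ, 0 < T → ∃ C : ℝ,
    ∀ t ∈ Set.Icc (0 : ℝ) T, inY γ (fun i => w i t) ∧ mom γ (fun i => w i t) ≤ C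

/-- A stationary solution of the discrete collision-induced breakage equation. -/
def IsStationaryCIB (a : ℕ → ℕ → ℝ) (B : ℕ → ℕ → ℕ → ℝ) (w : ℕ → ℝ) : Prop :=
  ∀ i, 1 ≤ i →
    Summable (fun n : ℕ => ∑ k ∈ Finset.Ico 1 (i + 1 + n),
      B (i + 1 + n - k) k i * a (i + 1 + n - k) k * w (i + 1 + n - k) * w k) ∧
    Summable (fun n : ℕ => a i (n + 1) * w i * w (n + 1)) ∧
    (1 / 2) * (∑' n : ℕ, ∑ k ∈ Finset.Ico 1 (i + 1 + n),
        B (i + 1 + n - k) k i * a (i + 1 + n - k) k * w (i + 1 + n - k) * w k) =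
      ∑' n : ℕ, a i (n + 1) * w i * w (n + 1)

lemma kerTrunc_nonneg (A α β : ℝ) (hA : 0 ≤ A) (l i j : ℕ) :
    0 ≤ kerTrunc A α β l i j := by
  unfold kerTrunc
  have h1 : (0:ℝ) ≤ ((min i l : ℕ) : ℝ) := Nat.cast_nonneg _
  have h2 : (0:ℝ) ≤ ((min j l : ℕ) : ℝ) := Nat.cast_nonneg _
  have h3 : (0:ℝ) ≤ (i : ℝ) := Nat.cast_nonneg _
  have h4 : (0:ℝ) ≤ (j : ℝ) := Nat.cast_nonneg _
  positivity

lemma kerTrunc_le_mul (A α β : ℝ) (hA : 0 ≤ A) (hαβ : α ≤ β) (hβ1 : β ≤ 1)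
    (l i j : ℕ) (hi : 1 ≤ i) (hj : 1 ≤ j) :
    kerTrunc A α β l i j ≤ 2 * A * i * j := by
  have hα1 : α ≤ 1 := hαβ.trans hβ1
  have key : ∀ k : ℕ, 1 ≤ k →
      ((min k l : ℕ) : ℝ) ^ max α 0 * (k : ℝ) ^ (α - max α 0) ≤ (k : ℝ) := by
    intro k hk
    have hk1 : (1:ℝ) ≤ (k:ℝ) := by exact_mod_cast hk
    have hk0 : (0:ℝ) < (k:ℝ) := lt_of_lt_of_le one_pos hk1
    have h1 : ((min k l : ℕ) : ℝ) ^ max α 0 ≤ (k : ℝ) ^ max α 0 :=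
      Real.rpow_le_rpow (Nat.cast_nonneg _) (by exact_mod_cast min_le_left k l)
        (le_max_right α 0)
    calc ((min k l : ℕ) : ℝ) ^ max α 0 * (k : ℝ) ^ (α - max α 0)
        ≤ (k : ℝ) ^ max α 0 * (k : ℝ) ^ (α - max α 0) :=
          mul_le_mul_of_nonneg_right h1 (Real.rpow_nonneg (Nat.cast_nonneg _) _)
      _ = (k : ℝ) ^ α := by rw [← Real.rpow_add hk0]; ring_nf
      _ ≤ (k : ℝ) ^ (1:ℝ) := Real.rpow_le_rpow_of_exponent_le hk1 hα1
      _ = (k : ℝ) := Real.rpow_one _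
  have keyβ : ∀ k : ℕ, 1 ≤ k → (k : ℝ) ^ β ≤ (k : ℝ) := by
    intro k hk
    have hk1 : (1:ℝ) ≤ (k:ℝ) := by exact_mod_cast hk
    calc (k : ℝ) ^ β ≤ (k : ℝ) ^ (1:ℝ) := Real.rpow_le_rpow_of_exponent_le hk1 hβ1
      _ = (k : ℝ) := Real.rpow_one _
  have hi0 : (0:ℝ) ≤ (i:ℝ) := Nat.cast_nonneg _
  have hj0 : (0:ℝ) ≤ (j:ℝ) := Nat.cast_nonneg _
  have hmi0 : (0:ℝ) ≤ ((min i l : ℕ):ℝ) ^ max α 0 * (i : ℝ) ^ (α - max α 0) := by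
    positivity
  have hmj0 : (0:ℝ) ≤ ((min j l : ℕ):ℝ) ^ max α 0 * (j : ℝ) ^ (α - max α 0) := by
    positivity
  have hβi0 : (0:ℝ) ≤ (i:ℝ) ^ β := Real.rpow_nonneg hi0 _
  have hβj0 : (0:ℝ) ≤ (j:ℝ) ^ β := Real.rpow_nonneg hj0 _
  have t1 : ((min i l : ℕ):ℝ) ^ max α 0 * (i : ℝ) ^ (α - max α 0) * (j : ℝ) ^ β
      ≤ (i:ℝ) * (j:ℝ) := mul_le_mul (key i hi) (keyβ j hj) hβj0 hi0
  have t2 : (i:ℝ) ^ β * ((min j l : ℕ):ℝ) ^ max α 0 * (j : ℝ) ^ (α - max α 0)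
      ≤ (i:ℝ) * (j:ℝ) := by
    rw [mul_assoc]
    exact mul_le_mul (keyβ i hi) (key j hj) hmj0 hi0
  unfold kerTrunc
  nlinarith [mul_nonneg hi0 hj0]

/-- Lemma 3.8 ([Laurençot 2001, Lemma 3.4]): an `L¹` bound on the time derivative of
the truncated solutions, uniform in `l`. -/
theorem stmt13 (A α β : ℝ) (hA : 0 < A) (hαβ : α ≤ β) (hβ1 : β ≤ 1) (hβ0 : 0 < β) (hα1 : α < 1)
    (B : ℕ → ℕ → ℕ → ℝ) (hB : HB B)
    (win : ℕ → ℝ) (hpos : ∀ i, 1 ≤ i → 0 ≤ win i) (hY1 : inY 1 win)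
    (ρ₁ : ℝ) (hM1 : mom 1 win ≤ ρ₁)
    (W : ℕ → ℕ → ℝ → ℝ)
    (hW : ∀ l : ℕ, 1 ≤ l →
      IsSol (kerTrunc A α β l) B (winTrunc l win) (W l) ∧
      MassConserving (winTrunc l win) (W l) ∧ LocBddMoments (W l)) :
    ∀ T : ℝ, 0 < T → ∀ i : ℕ, 1 ≤ i → ∃ Cst : ℝ,
      ∀ l : ℕ, i ≤ l →
        (∫ t in Set.Ioc (0 : ℝ) T,
          |gainT (kerTrunc A α β l) B (W l) i t - lossT (kerTrunc A α β l) (W l) i t|) ≤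
          Cst := by
  have hA0 : (0:ℝ) ≤ A := hA.le
  have hmom0 : 0 ≤ mom 1 win :=
    tsum_nonneg fun n => mul_nonneg (Real.rpow_nonneg (Nat.cast_nonneg _) _)
      (hpos _ (by omega))
  have hρ0 : 0 ≤ ρ₁ := hmom0.trans hM1
  intro T hT i hi
  refine ⟨ρ₁ + 2 * (2 * A * ρ₁ ^ 2 * T), ?_⟩
  intro l hl
  have hl1 : 1 ≤ l := hi.trans hl
  obtain ⟨hsol, hmass, _⟩ := hW l hl1
  obtain ⟨hw0, hcont, hinit, hint⟩ := hsol
  obtain ⟨hlint, hgint, heq⟩ := hint i hi T hT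
  set a := kerTrunc A α β l with ha
  set g := gainT a B (W l) i with hg
  set lo := lossT a (W l) i with hlo
  -- summability of the first moment of `W l · t`
  have hsumm : ∀ t : ℝ, 0 ≤ t →
      Summable (fun n : ℕ => ((n + 1 : ℕ) : ℝ) ^ (1:ℝ) * W l (n + 1) t) := by
    intro t ht
    exact ((hmass t ht).1).congr fun n => by
      rw [abs_of_nonneg (hw0 _ (by omega) t ht)]
  -- the truncated initial mass is at most ρ₁
  have hwin_summ : Summable (fun n : ℕ => ((n + 1 : ℕ) : ℝ) ^ (1:ℝ) * win (n + 1)) :=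
    hY1.congr fun n => by rw [abs_of_nonneg (hpos _ (by omega))]
  have htrunc_le : ∀ n : ℕ,
      ((n + 1 : ℕ) : ℝ) ^ (1:ℝ) * winTrunc l win (n + 1) ≤
        ((n + 1 : ℕ) : ℝ) ^ (1:ℝ) * win (n + 1) := by
    intro n
    unfold winTrunc
    split
    · exact le_refl _
    · rw [mul_zero]
      exact mul_nonneg (Real.rpow_nonneg (Nat.cast_nonneg _) _)
        (hpos (n + 1) (Nat.le_add_left 1 n))
  have htrunc_nonneg : ∀ n : ℕ,
      0 ≤ ((n + 1 : ℕ) : ℝ) ^ (1:ℝ) * winTrunc l win (n + 1) := by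
    intro n
    unfold winTrunc
    split
    · exact mul_nonneg (Real.rpow_nonneg (Nat.cast_nonneg _) _) (hpos _ (by omega))
    · simp
  have hmomtr : mom 1 (winTrunc l win) ≤ ρ₁ := by
    have h1 : mom 1 (winTrunc l win) ≤ mom 1 win :=
      Summable.tsum_le_tsum htrunc_le
        (Summable.of_nonneg_of_le htrunc_nonneg htrunc_le hwin_summ) hwin_summ
    exact h1.trans hM1
  -- mass bound at each time
  have hmassle : ∀ t : ℝ, 0 ≤ t → mom 1 (fun k => W l k t) ≤ ρ₁ := by
    intro t ht
    rw [(hmass t ht).2]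
    exact hmomtr
  -- `k * W l k t ≤ ρ₁`
  have hterm : ∀ t : ℝ, 0 ≤ t → ∀ k : ℕ, 1 ≤ k → (k : ℝ) * W l k t ≤ ρ₁ := by
    intro t ht k hk
    have hle := Summable.le_tsum (hsumm t ht) (k - 1) (fun j _ =>
      mul_nonneg (Real.rpow_nonneg (Nat.cast_nonneg _) _) (hw0 _ (by omega) t ht))
    rw [Nat.sub_add_cancel hk, Real.rpow_one] at hle
    exact hle.trans (hmassle t ht)
  have hwle : ∀ t : ℝ, 0 ≤ t → ∀ k : ℕ, 1 ≤ k → W l k t ≤ ρ₁ := by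
    intro t ht k hk
    have h1 : (1:ℝ) ≤ (k:ℝ) := by exact_mod_cast hk
    have h2 := hw0 k hk t ht
    nlinarith [hterm t ht k hk]
  -- nonnegativity of loss and gain terms
  have hloss0 : ∀ τ : ℝ, 0 ≤ τ → 0 ≤ lo τ := by
    intro τ hτ
    refine tsum_nonneg fun n => ?_
    exact mul_nonneg (mul_nonneg (kerTrunc_nonneg A α β hA0 l _ _)
      (hw0 i hi τ hτ)) (hw0 _ (by omega) τ hτ)
  have hgain0 : ∀ τ : ℝ, 0 ≤ τ → 0 ≤ g τ := by
    intro τ hτ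
    refine mul_nonneg (by norm_num) (tsum_nonneg fun n => Finset.sum_nonneg fun k hk => ?_)
    obtain ⟨hk1, hk2⟩ := Finset.mem_Ico.1 hk
    have hjk : 1 ≤ i + 1 + n - k := by omega
    have hBnn := (hB (i + 1 + n - k) k hjk hk1).1 i
    exact mul_nonneg (mul_nonneg (mul_nonneg hBnn
      (kerTrunc_nonneg A α β hA0 l _ _)) (hw0 _ hjk τ hτ)) (hw0 _ hk1 τ hτ)
  -- pointwise bound on the loss term
  have hloss_le : ∀ τ ∈ Set.Ioc (0:ℝ) T, lo τ ≤ 2 * A * ρ₁ ^ 2 := by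
    intro τ hτ
    have hτ0 : (0:ℝ) ≤ τ := hτ.1.le
    have hdom : ∀ n : ℕ, a i (n + 1) * W l i τ * W l (n + 1) τ ≤
        (2 * A * ρ₁) * (((n + 1 : ℕ) : ℝ) ^ (1:ℝ) * W l (n + 1) τ) := by
      intro n
      have hk1 : (1:ℕ) ≤ n + 1 := by omega
      have hker := kerTrunc_le_mul A α β hA0 hαβ hβ1 l i (n + 1) hi hk1
      have hwi := hw0 i hi τ hτ0
      have hwn := hw0 (n + 1) hk1 τ hτ0
      have h1 : a i (n + 1) * W l i τ * W l (n + 1) τ ≤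
          (2 * A * (i : ℝ) * ((n + 1 : ℕ) : ℝ)) * W l i τ * W l (n + 1) τ :=
        mul_le_mul_of_nonneg_right (mul_le_mul_of_nonneg_right hker hwi) hwn
      have h2 : (2 * A * (i : ℝ) * ((n + 1 : ℕ) : ℝ)) * W l i τ * W l (n + 1) τ =
          (2 * A) * ((i : ℝ) * W l i τ) * (((n + 1 : ℕ) : ℝ) * W l (n + 1) τ) := by
        push_cast; ring
      have h3 : (2 * A) * ((i : ℝ) * W l i τ) * (((n + 1 : ℕ) : ℝ) * W l (n + 1) τ) ≤
          (2 * A * ρ₁) * (((n + 1 : ℕ) : ℝ) * W l (n + 1) τ) := by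
        apply mul_le_mul_of_nonneg_right
        · exact mul_le_mul_of_nonneg_left (hterm τ hτ0 i hi) (by linarith)
        · exact mul_nonneg (Nat.cast_nonneg _) hwn
      rw [Real.rpow_one]
      calc a i (n + 1) * W l i τ * W l (n + 1) τ
          ≤ (2 * A * (i : ℝ) * ((n + 1 : ℕ) : ℝ)) * W l i τ * W l (n + 1) τ := h1
        _ = (2 * A) * ((i : ℝ) * W l i τ) * (((n + 1 : ℕ) : ℝ) * W l (n + 1) τ) := h2
        _ ≤ (2 * A * ρ₁) * (((n + 1 : ℕ) : ℝ) * W l (n + 1) τ) := h3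
    have hsumdom : Summable (fun n : ℕ =>
        (2 * A * ρ₁) * (((n + 1 : ℕ) : ℝ) ^ (1:ℝ) * W l (n + 1) τ)) :=
      (hsumm τ hτ0).mul_left _
    have hnn : ∀ n : ℕ, 0 ≤ a i (n + 1) * W l i τ * W l (n + 1) τ := fun n =>
      mul_nonneg (mul_nonneg (kerTrunc_nonneg A α β hA0 l _ _)
        (hw0 i hi τ hτ0)) (hw0 _ (by omega) τ hτ0)
    have h4 : lo τ ≤ ∑' n : ℕ,
        (2 * A * ρ₁) * (((n + 1 : ℕ) : ℝ) ^ (1:ℝ) * W l (n + 1) τ) :=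
      Summable.tsum_le_tsum hdom (Summable.of_nonneg_of_le hnn hdom hsumdom) hsumdom
    have h5 : (∑' n : ℕ, (2 * A * ρ₁) * (((n + 1 : ℕ) : ℝ) ^ (1:ℝ) * W l (n + 1) τ))
        = (2 * A * ρ₁) * mom 1 (fun k => W l k τ) := by
      rw [tsum_mul_left]; rfl
    have h6 : (2 * A * ρ₁) * mom 1 (fun k => W l k τ) ≤ (2 * A * ρ₁) * ρ₁ :=
      mul_le_mul_of_nonneg_left (hmassle τ hτ0) (by positivity)
    calc lo τ ≤ (2 * A * ρ₁) * mom 1 (fun k => W l k τ) := h5 ▸ h4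
      _ ≤ (2 * A * ρ₁) * ρ₁ := h6
      _ = 2 * A * ρ₁ ^ 2 := by ring
  -- integral of the loss term
  have hconst_int : IntegrableOn (fun _ : ℝ => 2 * A * ρ₁ ^ 2) (Set.Ioc 0 T) :=
    integrableOn_const measure_Ioc_lt_top.ne
  have hloss_int_le : (∫ τ in Set.Ioc (0:ℝ) T, lo τ) ≤ 2 * A * ρ₁ ^ 2 * T := by
    have h1 := setIntegral_mono_on hlint hconst_int measurableSet_Ioc hloss_le
    have h2 : (∫ _ in Set.Ioc (0:ℝ) T, (2 * A * ρ₁ ^ 2)) = 2 * A * ρ₁ ^ 2 * T := by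
      rw [setIntegral_const, Real.volume_real_Ioc_of_le hT.le, sub_zero,
        smul_eq_mul, mul_comm]
    exact h2 ▸ h1
  -- integral of the difference
  have hgl_int : IntegrableOn (fun τ => g τ - lo τ) (Set.Ioc 0 T) := hgint.sub hlint
  have hkey : (∫ τ in Set.Ioc (0:ℝ) T, (g τ - lo τ)) =
      W l i T - winTrunc l win i := by
    rw [heq]; ring
  have hwinTnn : 0 ≤ winTrunc l win i := by
    simpa [winTrunc, hl] using hpos i hi
  -- main estimate
  have hptwise : ∀ τ ∈ Set.Ioc (0:ℝ) T,
      |g τ - lo τ| ≤ (g τ - lo τ) + 2 * lo τ := by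
    intro τ hτ
    have h1 := hgain0 τ hτ.1.le
    have h2 := hloss0 τ hτ.1.le
    rw [abs_le]
    constructor <;> [skip; skip] <;> nlinarith
  have hrhs_int : IntegrableOn (fun τ => (g τ - lo τ) + 2 * lo τ) (Set.Ioc 0 T) :=
    hgl_int.add (hlint.const_mul 2)
  have hmono := setIntegral_mono_on hgl_int.abs hrhs_int measurableSet_Ioc hptwise
  have hsplit : (∫ τ in Set.Ioc (0:ℝ) T, ((g τ - lo τ) + 2 * lo τ)) =
      (∫ τ in Set.Ioc (0:ℝ) T, (g τ - lo τ)) + 2 * ∫ τ in Set.Ioc (0:ℝ) T, lo τ := by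
    rw [integral_add hgl_int (hlint.const_mul 2), integral_const_mul]
  have hWT : W l i T ≤ ρ₁ := hwle T hT.le i hi
  calc (∫ t in Set.Ioc (0:ℝ) T, |g t - lo t|)
      ≤ ∫ τ in Set.Ioc (0:ℝ) T, ((g τ - lo τ) + 2 * lo τ) := hmono
    _ = (W l i T - winTrunc l win i) + 2 * ∫ τ in Set.Ioc (0:ℝ) T, lo τ := by
        rw [hsplit, hkey]
    _ ≤ ρ₁ + 2 * (2 * A * ρ₁ ^ 2 * T) := by linarith
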